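/- arXiv:1309.0265 — 2 statements merged into one kernel-verified Lean document; each statement's English description precedes it below -/
import Mathlib

section
/- In a single-patch SIR model with periodic vaccination rate ζ, with basic reproduction number in the absence of vaccination R̂_0 = ⟨β⟩ b / (μ(μ+γ)) and a constant-vaccination comparison strategy of equal cost having reproduction number R_e^c, the effective reproduction number satisfies R_e = R_e^c - R̂_0 · (1/τ) ∫_0^τ s̄_ζ(t)(1 - β(t)/⟨β⟩) dt. In particular, if β(t) ≡ ⟨β⟩ is constant, then R_e = R_e^c: all periodic vaccination strategies of equal cost yield the same effective reproduction number. -/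
open MeasureTheory intervalIntegral

/-- In the single-patch SIR model with τ-periodic vaccination rate ζ whose
disease-free susceptible solution is `S̄_ζ` and whose cost equals that of the constant
strategy with rate σ, the effective reproduction number
`R_e = (1/((μ+γ)τ)) ∫₀^τ β S̄_ζ` satisfies
`R_e = R_e^c - R̂₀ (1/τ) ∫₀^τ s̄_ζ(t)(1 - β(t)/⟨β⟩) dt`, where `s̄_ζ = (μ/b)S̄_ζ`,
`R_e^c = ⟨β⟩b/((μ+σ)(μ+γ))` and `R̂₀ = ⟨β⟩b/(μ(μ+γ))`.  In particular, if `β ≡ ⟨β⟩`,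
then `R_e = R_e^c`. -/
theorem periodic_vs_constant_vaccination (b μ γ τ σ : ℝ)
    (hb : 0 < b) (hμ : 0 < μ) (hγ : 0 < γ) (hτ : 0 < τ) (hσ : 0 ≤ σ)
    (β Sζ : ℝ → ℝ)
    (hβint : IntervalIntegrable β volume 0 τ)
    (hSint : IntervalIntegrable Sζ volume 0 τ)
    (hβSint : IntervalIntegrable (fun t => β t * Sζ t) volume 0 τ)
    (avgβ : ℝ) (havg : avgβ = (1/τ) * ∫ t in (0:ℝ)..τ, β t)
    (havgpos : 0 < avgβ)
    (hcost : σ * b * τ / (μ + σ) = τ * b - μ * ∫ t in (0:ℝ)..τ, Sζ t)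
    (Re Rec R0hat : ℝ)
    (hRe : Re = (1/((μ+γ)*τ)) * ∫ t in (0:ℝ)..τ, β t * Sζ t)
    (hRec : Rec = avgβ * b / ((μ+σ)*(μ+γ)))
    (hR0 : R0hat = avgβ * b / (μ*(μ+γ))) :
    Re = Rec - R0hat * (1/τ) * ∫ t in (0:ℝ)..τ, (μ/b) * Sζ t * (1 - β t / avgβ) ∧
      ((∀ t, β t = avgβ) → Re = Rec) := by
  have hμσ : 0 < μ + σ := by linarith
  have hμγ : (μ+γ) ≠ 0 := by positivity
  have hIS : (∫ t in (0:ℝ)..τ, Sζ t) = b * τ / (μ + σ) := by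
    field_simp at hcost
    field_simp
    nlinarith [hcost]
  have hI : (∫ t in (0:ℝ)..τ, (μ/b) * Sζ t * (1 - β t / avgβ))
      = (μ/b) * (∫ t in (0:ℝ)..τ, Sζ t)
        - (μ/(b*avgβ)) * (∫ t in (0:ℝ)..τ, β t * Sζ t) := by
    have h : ∀ t, (μ/b) * Sζ t * (1 - β t / avgβ)
        = (μ/b) * Sζ t - (μ/(b*avgβ)) * (β t * Sζ t) := fun t => by ring
    simp_rw [h]
    rw [integral_sub ((hSint.const_mul _)) ((hβSint.const_mul _)),
      intervalIntegral.integral_const_mul, intervalIntegral.integral_const_mul]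
  constructor
  · rw [hRe, hRec, hR0, hI, hIS]
    field_simp
    ring
  · intro hβ
    have : (∫ t in (0:ℝ)..τ, β t * Sζ t) = avgβ * ∫ t in (0:ℝ)..τ, Sζ t := by
      simp_rw [hβ]
      rw [intervalIntegral.integral_const_mul]
    rw [hRe, hRec, this, hIS]
    field_simp
end

section
/- In the autonomous N-patch SIR model with environmental transmission (direct transmission rates β_{ij}, environmental transmission rates ε_{ij}, shedding rates ξ_j, decay rates ν_j), the effective reproduction number equals that of the model with no environmental compartments but modified direct transmission rates β̃_{ij} = β_{ij} + (ξ_j/ν_j) ε_{ij}. -/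
open Matrix in
private lemma hasEig_iff {n : Type*} [Fintype n] [DecidableEq n] (M : Matrix n n ℂ) (z : ℂ) :
    Module.End.HasEigenvalue (Matrix.toLin' M) z ↔ ∃ v ≠ 0, M.mulVec v = z • v := by
  rw [Module.End.hasEigenvalue_iff, Submodule.ne_bot_iff]
  simp only [Module.End.mem_eigenspace_iff, Matrix.toLin'_apply]
  tauto

/-- The spectral radius of a real square matrix: the supremum of the moduli of its complex
eigenvalues. -/
noncomputable def specRad {n : Type*} [Fintype n] [DecidableEq n] (M : Matrix n n ℝ) : ℝ :=
  sSup {r : ℝ | ∃ z : ℂ,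
    Module.End.HasEigenvalue (Matrix.toLin' (M.map (Complex.ofReal ·))) z ∧ r = ‖z‖}

open Matrix in
private lemma specRad_blocks {N : ℕ} (M B : Matrix (Fin N) (Fin N) ℝ) :
    specRad (Matrix.fromBlocks M B (0 : Matrix (Fin N) (Fin N) ℝ) 0) = specRad M := by
  have hmap : (Matrix.fromBlocks M B (0 : Matrix (Fin N) (Fin N) ℝ) 0).map (Complex.ofReal ·) =
      Matrix.fromBlocks (M.map (Complex.ofReal ·)) (B.map (Complex.ofReal ·)) 0 0 := by
    rw [Matrix.fromBlocks_map]
    congr 1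
  set Mc := M.map (Complex.ofReal ·) with hMc
  set Bc := B.map (Complex.ofReal ·) with hBc
  rcases Nat.eq_zero_or_pos N with hN | hN
  · subst hN
    unfold specRad
    have h1 : ∀ (n : Type) [Fintype n] [DecidableEq n] [IsEmpty n] (T : Matrix n n ℂ) (z : ℂ),
        ¬ Module.End.HasEigenvalue (Matrix.toLin' T) z := by
      intro n _ _ _ T z h
      rw [hasEig_iff] at h
      obtain ⟨v, hv, -⟩ := h
      exact hv (Subsingleton.elim v 0)
    congr 1
    ext r
    simp only [Set.mem_setOf_eq]
    constructor
    · rintro ⟨z, hz, -⟩; exact absurd hz (h1 _ _ z)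
    · rintro ⟨z, hz, -⟩; exact absurd hz (h1 _ _ z)
  · -- N ≥ 1
    have : Nonempty (Fin N) := ⟨⟨0, hN⟩⟩
    set S : Set ℝ := {r : ℝ | ∃ z : ℂ,
      Module.End.HasEigenvalue (Matrix.toLin' Mc) z ∧ r = ‖z‖} with hS
    have hSet : {r : ℝ | ∃ z : ℂ,
        Module.End.HasEigenvalue (Matrix.toLin'
          ((Matrix.fromBlocks M B (0 : Matrix (Fin N) (Fin N) ℝ) 0).map (Complex.ofReal ·))) z ∧ r = ‖z‖}
        = insert 0 S := by
      rw [hmap]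
      ext r
      simp only [Set.mem_setOf_eq, Set.mem_insert_iff, hS]
      constructor
      · rintro ⟨z, hz, rfl⟩
        rw [hasEig_iff] at hz
        obtain ⟨v, hv, hveq⟩ := hz
        rcases eq_or_ne z 0 with rfl | hz0
        · left; simp
        · right
          refine ⟨z, ?_, rfl⟩
          rw [hasEig_iff]
          have hw : ∀ j, v (Sum.inr j) = 0 := by
            intro j
            have := congrFun hveq (Sum.inr j)
            simp [Matrix.fromBlocks_mulVec, Pi.smul_apply, smul_eq_mul] at this
            exact this.resolve_left hz0
          refine ⟨fun i => v (Sum.inl i), ?_, ?_⟩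
          · intro h0
            apply hv
            funext x
            cases x with
            | inl i => exact congrFun h0 i
            | inr j => exact hw j
          · funext i
            have := congrFun hveq (Sum.inl i)
            simp only [Matrix.fromBlocks_mulVec, Sum.elim_inl, Pi.add_apply,
              Pi.smul_apply, smul_eq_mul] at this
            have hB0 : Bc.mulVec (fun j => v (Sum.inr j)) = 0 := by
              have : (fun j => v (Sum.inr j)) = (0 : Fin N → ℂ) := funext hw
              rw [this, Matrix.mulVec_zero]
            simpa [Matrix.mulVec, dotProduct, hw, Pi.smul_apply, smul_eq_mul]
              using this
      · rintro (rfl | ⟨z, hz, rfl⟩)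
        · refine ⟨0, ?_, by simp⟩
          rw [hasEig_iff]
          have hdet : (Matrix.fromBlocks Mc Bc 0 0).det = 0 := by
            rw [Matrix.det_fromBlocks_zero₂₁, Matrix.det_zero, mul_zero]
          obtain ⟨v, hv, hveq⟩ := (Matrix.exists_mulVec_eq_zero_iff).mpr hdet
          exact ⟨v, hv, by simpa using hveq⟩
        · refine ⟨z, ?_, rfl⟩
          rw [hasEig_iff] at hz ⊢
          obtain ⟨u, hu, huq⟩ := hz
          refine ⟨Sum.elim u 0, ?_, ?_⟩
          · intro h0
            apply hu
            funext i
            exact congrFun h0 (Sum.inl i)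
          · funext x
            cases x with
            | inl i =>
              have := congrFun huq i
              simp [Matrix.fromBlocks_mulVec, Matrix.mulVec_zero, this]
            | inr j => simp [Matrix.fromBlocks_mulVec]
    have hSne : S.Nonempty := by
      obtain ⟨z, hz⟩ := Module.End.exists_eigenvalue (Matrix.toLin' Mc)
      exact ⟨‖z‖, z, hz, rfl⟩
    have hSbdd : BddAbove S := by
      have : S = (fun z : ℂ => ‖z‖) '' {z | Module.End.HasEigenvalue (Matrix.toLin' Mc) z} := by
        ext r; simp [hS, eq_comm]
      rw [this]
      exact ((Module.End.finite_hasEigenvalue _).image _).bddAbove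
    have hSnn : 0 ≤ sSup S := by
      obtain ⟨r, z, hz, rfl⟩ := hSne
      exact le_trans (norm_nonneg z) (le_csSup hSbdd ⟨z, hz, rfl⟩)
    unfold specRad
    rw [hSet, csSup_insert hSbdd hSne, sup_eq_right.mpr hSnn]

/-- In the autonomous N-patch SIR model with environmental transmission,
the effective reproduction number `ρ(F V⁻¹)` (next-generation matrix of the full model with
environmental compartments) equals the effective reproduction number `ρ(D̃ A⁻¹)` of the model
without environmental compartments but with modified direct transmission rates
`β̃ᵢⱼ = βᵢⱼ + (ξⱼ/νⱼ) εᵢⱼ`. -/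
theorem environmental_transmission_reproduction_number {N : ℕ}
    (β ε : Matrix (Fin N) (Fin N) ℝ) (ξ ν μ γ Sbar : Fin N → ℝ)
    (k : Matrix (Fin N) (Fin N) ℝ)
    (hν : ∀ j, 0 < ν j)
    (A : Matrix (Fin N) (Fin N) ℝ)
    (hAdef : ∀ i j, A i j = if i = j then μ i + γ i + k i i else -(k i j))
    (hA : IsUnit A.det)
    (D E Bt C : Matrix (Fin N) (Fin N) ℝ)
    (hD : ∀ i j, D i j = β i j * Sbar i)
    (hE : ∀ i j, E i j = ε i j * Sbar i)
    (hB : Bt = Matrix.diagonal ξ)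
    (hC : C = Matrix.diagonal ν)
    (F V : Matrix (Fin N ⊕ Fin N) (Fin N ⊕ Fin N) ℝ)
    (hF : F = Matrix.fromBlocks D E 0 0)
    (hV : V = Matrix.fromBlocks A 0 (-Bt) C)
    (Dtilde : Matrix (Fin N) (Fin N) ℝ)
    (hDt : ∀ i j, Dtilde i j = (β i j + ξ j / ν j * ε i j) * Sbar i) :
    specRad (F * V⁻¹) = specRad (Dtilde * A⁻¹) := by
  have hCd : IsUnit C.det := by
    rw [hC, Matrix.det_diagonal]
    exact isUnit_iff_ne_zero.mpr (Finset.prod_ne_zero_iff.mpr fun j _ => (hν j).ne')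
  have hAA : A * A⁻¹ = 1 := Matrix.mul_nonsing_inv A hA
  have hCC : C * C⁻¹ = 1 := Matrix.mul_nonsing_inv C hCd
  have hVinv : V⁻¹ = Matrix.fromBlocks A⁻¹ 0 (C⁻¹ * Bt * A⁻¹) C⁻¹ := by
    apply Matrix.inv_eq_right_inv
    rw [hV, Matrix.fromBlocks_multiply]
    have h1 : -Bt * A⁻¹ + C * (C⁻¹ * Bt * A⁻¹) = 0 := by
      rw [← Matrix.mul_assoc, ← Matrix.mul_assoc, hCC, Matrix.one_mul, neg_mul,
        neg_add_cancel]
    rw [hAA, hCC, h1]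
    simp [Matrix.fromBlocks_one]
  have hCinv : C⁻¹ = Matrix.diagonal (fun j => (ν j)⁻¹) := by
    apply Matrix.inv_eq_right_inv
    rw [hC, Matrix.diagonal_mul_diagonal]
    convert Matrix.diagonal_one using 2
    exact funext fun j => mul_inv_cancel₀ (hν j).ne'
  have hFV : F * V⁻¹ = Matrix.fromBlocks (Dtilde * A⁻¹) (E * C⁻¹)
      (0 : Matrix (Fin N) (Fin N) ℝ) 0 := by
    rw [hF, hVinv, Matrix.fromBlocks_multiply]
    have h2 : D * A⁻¹ + E * (C⁻¹ * Bt * A⁻¹) = Dtilde * A⁻¹ := by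
      rw [← Matrix.mul_assoc, ← Matrix.add_mul]
      congr 1
      ext i j
      rw [hCinv, hB, Matrix.diagonal_mul_diagonal]
      simp only [Matrix.add_apply, Matrix.mul_diagonal, hD i j, hE i j, hDt i j]
      field_simp
    rw [h2]
    simp
  rw [hFV, specRad_blocks]
end
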